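/- Cutting the edge {1, α(1)} in a unicellular map u ∈ U^{III}_{g+1,n+1} (i.e., restricting α to H₁ = {1,…,α(1)} and to its complement H₂, and splitting the vertex containing the half-edge α(1) accordingly) produces two unicellular maps u₁ and u₂ with k and n−k edges respectively (where α(1) = 2k), whose genera g₁, g₂ satisfy g₁ + g₂ = g + 1. -/

import Mathlib

/-- Number of cycles of a permutation, counting fixed points as trivial cycles. -/
def cycleCount {β : Type*} [Fintype β] [DecidableEq β] (σ : Equiv.Perm β) : ℕ :=
  σ.cycleType.card + (Finset.univ.filter fun x => σ x = x).card

/-- `IsPUMap g n α σ`: `(α, σ)` is a planted unicellular map of genus `g` with `n` edges.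
The `2n+2` half-edges are `Fin (2*n+2)`, listed in boundary order: index `0` is the root
half-edge `1_R`, index `i` (for `1 ≤ i ≤ 2n`) is the half-edge labelled `i`, and index
`2n+1` is the plant half-edge `2n_R`.  `α` is a fixed-point-free involution containing
the rainbow cycle `(1_R, 2n_R)`, the boundary (face) permutation `γ = α ∘ σ` is the
single cycle `(1_R, 1, 2, …, 2n, 2n_R)`, i.e. the standard rotation `finRotate`, and the
genus is given by Euler's relation `2 - 2g = (J - 1) - n + 1`, where
`J = cycleCount σ` counts the vertices of the map including the plant. -/
def IsPUMap (g n : ℕ) (α σ : Equiv.Perm (Fin (2 * n + 2))) : Prop :=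
  (∀ x, α (α x) = x) ∧ (∀ x, α x ≠ x) ∧
  α ⟨0, by omega⟩ = ⟨2 * n + 1, by omega⟩ ∧
  α * σ = finRotate (2 * n + 2) ∧
  ((cycleCount σ : ℤ) - 1) - n + 1 = 2 - 2 * (g : ℤ)

/-- A planted unicellular map of genus `g` with `n` edges. -/
structure PUMap (g n : ℕ) where
  α : Equiv.Perm (Fin (2 * n + 2))
  σ : Equiv.Perm (Fin (2 * n + 2))
  prop : IsPUMap g n α σ

/-- The embedding of the half-edges of the second piece `u₂` into the original map:
position `0` (the overall root) and the positions after the `2k+2` half-edges of `u₁`. -/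
def glue2 (k : ℕ) (i : ℕ) : ℕ := if i = 0 then 0 else i + (2 * k + 2)

namespace CCAux

open Equiv Equiv.Perm Finset

variable {β : Type*} [Fintype β] [DecidableEq β]

lemma cc_plus (σ : Perm β) :
    cycleCount σ + σ.support.card = Multiset.card σ.cycleType + Fintype.card β := by
  have h : (Finset.univ.filter fun x => σ x = x) = σ.supportᶜ := by
    ext x; simp [Equiv.Perm.mem_support]
  rw [cycleCount, h, Finset.card_compl]
  have := Finset.card_le_univ σ.support
  omega

lemma supp_le (σ : Perm β) : σ.support.card ≤ Fintype.card β :=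
  Finset.card_le_univ σ.support

lemma cc_one : cycleCount (1 : Perm β) = Fintype.card β := by
  have := cc_plus (1 : Perm β)
  simp only [Equiv.Perm.cycleType_one, Equiv.Perm.support_one] at this
  simpa using this

lemma cc_disjoint {f g : Perm β} (h : Disjoint f g) :
    cycleCount (f * g) + Fintype.card β = cycleCount f + cycleCount g := by
  have h1 := cc_plus (f * g)
  have h2 := cc_plus f
  have h3 := cc_plus g
  rw [h.cycleType_mul, h.support_mul, Multiset.card_add,
    Finset.card_union_of_disjoint h.disjoint_support] at h1
  have := supp_le f; have := supp_le g
  have := supp_le (f * g)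
  omega

lemma cc_cycle {c : Perm β} (hc : IsCycle c) :
    cycleCount c + c.support.card = Fintype.card β + 1 := by
  have h := cc_plus c
  rw [hc.cycleType] at h
  simp only [Multiset.card_singleton] at h
  omega

lemma cc_ge (σ : Perm β) : Fintype.card β ≤ cycleCount σ + σ.support.card := by
  have := cc_plus σ; omega

lemma cc_ge' {σ : Perm β} (h : σ ≠ 1) :
    Fintype.card β + 1 ≤ cycleCount σ + σ.support.card := by
  have h1 := cc_plus σ
  have h2 : Multiset.card σ.cycleType ≠ 0 := by
    rw [Ne, Equiv.Perm.card_cycleType_eq_zero]; exact h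
  omega

lemma cc_inv (σ : Perm β) : cycleCount σ⁻¹ = cycleCount σ := by
  have h1 := cc_plus σ⁻¹
  have h2 := cc_plus σ
  rw [Equiv.Perm.cycleType_inv, Equiv.Perm.support_inv] at h1
  omega

lemma decomp (g : Perm β) {a : β} (ha : g a ≠ a) :
    ∃ c d : Perm β, g = c * d ∧ Disjoint c d ∧ IsCycle c ∧ c a = g a ∧
      (∀ x, x ∈ c.support ↔ g.SameCycle a x ∧ g x ≠ x) ∧
      (∀ x, d x = if g.SameCycle a x then x else g x) := by
  set c := g.cycleOf a with hc
  have hdap : ∀ x, ((g.cycleOf a)⁻¹ * g) x = if g.SameCycle a x then x else g x := by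
    intro x
    by_cases h : g.SameCycle a x
    · have hcx : c x = g x := h.cycleOf_apply
      simp only [Equiv.Perm.mul_apply, if_pos h]
      rw [← hcx]
      exact Equiv.symm_apply_apply c x
    · have h' : ¬ g.SameCycle a (g x) := by
        rwa [Equiv.Perm.sameCycle_apply_right]
      have hcx : c (g x) = g x := by
        rw [hc, Equiv.Perm.cycleOf_apply, if_neg h']
      simp only [Equiv.Perm.mul_apply, if_neg h]
      nth_rewrite 1 [← hcx]
      exact Equiv.symm_apply_apply c (g x)
  refine ⟨c, c⁻¹ * g, by group, ?_, Equiv.Perm.isCycle_cycleOf g ha, g.cycleOf_apply_self a,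
    ?_, hdap⟩
  · intro x
    by_cases h : g.SameCycle a x
    · right; rw [hdap x, if_pos h]
    · left; rw [hc, Equiv.Perm.cycleOf_apply, if_neg h]
  · intro x
    rw [hc, Equiv.Perm.mem_support_cycleOf_iff]
    constructor
    · rintro ⟨h1, _⟩
      refine ⟨h1, fun hfix => ha (h1.apply_eq_self_iff.2 hfix)⟩
    · rintro ⟨h1, _⟩
      exact ⟨h1, Equiv.Perm.mem_support.2 ha⟩


lemma cc_removal (g : Perm β) {a : β} (ha : g a ≠ a) :
    cycleCount g + 1 ≤ cycleCount (g * Equiv.swap a (g a)) := by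
  obtain ⟨c, d, hg, hdis, hcyc, hca, hmem, hd⟩ := decomp g ha
  have hda : d a = a := by rw [hd, if_pos (Equiv.Perm.SameCycle.refl g a)]
  have hdga : d (g a) = g a := by rw [hd, if_pos ⟨1, by simp⟩]
  have hga_ne : g (g a) ≠ g a := fun h => ha (g.injective h)
  have hamem : a ∈ c.support := (hmem a).2 ⟨Equiv.Perm.SameCycle.refl g a, ha⟩
  have hgamem : g a ∈ c.support := (hmem (g a)).2 ⟨⟨1, by simp⟩, hga_ne⟩
  have hdisdτ : Disjoint d (Equiv.swap a (g a)) := by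
    intro x
    by_cases hx : x = a ∨ x = g a
    · rcases hx with rfl | rfl
      · exact Or.inl hda
      · exact Or.inl hdga
    · push_neg at hx
      exact Or.inr (Equiv.swap_apply_of_ne_of_ne hx.1 hx.2)
  have hprodgen : ∀ τ : Perm β, Disjoint d τ → g * τ = (c * τ) * d := fun τ hτd => by
    rw [hg, mul_assoc, hτd.commute.eq, ← mul_assoc]
  have hprod : g * Equiv.swap a (g a) = (c * Equiv.swap a (g a)) * d := hprodgen _ hdisdτ
  have hdiscτ : Disjoint (c * Equiv.swap a (g a)) d := by
    intro x
    rcases hdis x with hcx | hdx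
    · by_cases hx : x = a ∨ x = g a
      · rcases hx with rfl | rfl
        · exact absurd hcx (Equiv.Perm.mem_support.1 hamem)
        · exact absurd hcx (Equiv.Perm.mem_support.1 hgamem)
      · push_neg at hx
        left
        rw [Equiv.Perm.mul_apply, Equiv.swap_apply_of_ne_of_ne hx.1 hx.2, hcx]
    · exact Or.inr hdx
  have hsub : (c * Equiv.swap a (g a)).support ⊆ c.support.erase (g a) := by
    intro x hx
    have hmoved := Equiv.Perm.mem_support.1 hx
    rw [Finset.mem_erase]
    constructor
    · rintro rfl
      exact hmoved (by rw [Equiv.Perm.mul_apply, Equiv.swap_apply_right, hca])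
    · by_contra hxc
      apply hmoved
      have hcx : c x = x := Equiv.Perm.notMem_support.1 hxc
      have hxa : x ≠ a := by rintro rfl; exact (Equiv.Perm.mem_support.1 hamem) hcx
      have hxga : x ≠ g a := by rintro rfl; exact (Equiv.Perm.mem_support.1 hgamem) hcx
      rw [Equiv.Perm.mul_apply, Equiv.swap_apply_of_ne_of_ne hxa hxga, hcx]
  have hcard : (c * Equiv.swap a (g a)).support.card + 1 ≤ c.support.card := by
    have h1 := Finset.card_le_card hsub
    rw [Finset.card_erase_of_mem hgamem] at h1
    have h2 : 1 ≤ c.support.card := Finset.card_pos.2 ⟨a, hamem⟩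
    omega
  have e1 := cc_disjoint hdiscτ
  rw [← hprod] at e1
  have e2 := cc_disjoint hdis
  rw [← hg] at e2
  have e3 := cc_cycle hcyc
  have e4 : 2 ≤ c.support.card := hcyc.two_le_card_support
  have e5 := supp_le c
  by_cases hone : c * Equiv.swap a (g a) = 1
  · rw [hone, cc_one] at e1
    omega
  · have e6 := cc_ge' hone
    omega

lemma cc_removal_left (g : Perm β) {a : β} (ha : g a ≠ a) :
    cycleCount g + 1 ≤ cycleCount (Equiv.swap a (g a) * g) := by
  have h1 : g⁻¹ (g a) ≠ g a := by
    rw [show g⁻¹ (g a) = a from g.symm_apply_apply a]; exact fun h => ha h.symm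
  have h2 := cc_removal g⁻¹ h1
  rw [cc_inv, show g⁻¹ (g a) = a from g.symm_apply_apply a] at h2
  have h3 : (Equiv.swap a (g a) * g)⁻¹ = g⁻¹ * Equiv.swap (g a) a := by
    rw [mul_inv_rev, Equiv.swap_inv, Equiv.swap_comm]
  calc cycleCount g + 1 ≤ cycleCount (g⁻¹ * Equiv.swap (g a) a) := h2
    _ = cycleCount (Equiv.swap a (g a) * g) := by rw [← h3, cc_inv]

lemma cc_swap_le_key (g : Perm β) {a b : β} (hab : a ≠ b) (hga : g a ≠ a) :
    cycleCount g ≤ cycleCount (g * Equiv.swap a b) + 1 := by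
  obtain ⟨c, d, hg, hdis, hcyc, hca, hmem, hd⟩ := decomp g hga
  have hamem : a ∈ c.support := (hmem a).2 ⟨Equiv.Perm.SameCycle.refl g a, hga⟩
  have hda : d a = a := by rw [hd, if_pos (Equiv.Perm.SameCycle.refl g a)]
  have e2 := cc_disjoint hdis
  rw [← hg] at e2
  have e3 := cc_cycle hcyc
  have e4 : 2 ≤ c.support.card := hcyc.two_le_card_support
  have e5 := supp_le c
  by_cases hb : b ∈ c.support
  · have hdb : d b = b := by rw [hd, if_pos ((hmem b).1 hb).1]
    have hdisdτ : Disjoint d (Equiv.swap a b) := by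
      intro x
      by_cases hx : x = a ∨ x = b
      · rcases hx with rfl | rfl
        · exact Or.inl hda
        · exact Or.inl hdb
      · push_neg at hx; exact Or.inr (Equiv.swap_apply_of_ne_of_ne hx.1 hx.2)
    have hprod : g * Equiv.swap a b = (c * Equiv.swap a b) * d := by
      rw [hg, mul_assoc, hdisdτ.commute.eq, ← mul_assoc]
    have hdiscτ : Disjoint (c * Equiv.swap a b) d := by
      intro x
      rcases hdis x with hcx | hdx
      · by_cases hx : x = a ∨ x = b
        · rcases hx with rfl | rfl
          · exact absurd hcx (Equiv.Perm.mem_support.1 hamem)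
          · exact absurd hcx (Equiv.Perm.mem_support.1 hb)
        · push_neg at hx
          left
          rw [Equiv.Perm.mul_apply, Equiv.swap_apply_of_ne_of_ne hx.1 hx.2, hcx]
      · exact Or.inr hdx
    have hsub : (c * Equiv.swap a b).support ⊆ c.support := by
      intro x hx
      have hmoved := Equiv.Perm.mem_support.1 hx
      by_contra hxc
      apply hmoved
      have hcx : c x = x := Equiv.Perm.notMem_support.1 hxc
      have hxa : x ≠ a := by rintro rfl; exact (Equiv.Perm.mem_support.1 hamem) hcx
      have hxb : x ≠ b := by rintro rfl; exact (Equiv.Perm.mem_support.1 hb) hcx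
      rw [Equiv.Perm.mul_apply, Equiv.swap_apply_of_ne_of_ne hxa hxb, hcx]
    have e1 := cc_disjoint hdiscτ
    rw [← hprod] at e1
    have e6 := Finset.card_le_card hsub
    have e7 := cc_ge (c * Equiv.swap a b)
    omega
  · have hcb : c b = b := Equiv.Perm.notMem_support.1 hb
    have hgamem : g a ∈ c.support :=
      (hmem (g a)).2 ⟨⟨1, by simp⟩, fun h => hga (g.injective h)⟩
    have hgab : g a ≠ b := by rintro rfl; exact hb hgamem
    by_cases hdb : d b = b
    · have hdisdτ : Disjoint d (Equiv.swap a b) := by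
        intro x
        by_cases hx : x = a ∨ x = b
        · rcases hx with rfl | rfl
          · exact Or.inl hda
          · exact Or.inl hdb
        · push_neg at hx; exact Or.inr (Equiv.swap_apply_of_ne_of_ne hx.1 hx.2)
      have hprod : g * Equiv.swap a b = (c * Equiv.swap a b) * d := by
        rw [hg, mul_assoc, hdisdτ.commute.eq, ← mul_assoc]
      have hdiscτ : Disjoint (c * Equiv.swap a b) d := by
        intro x
        rcases hdis x with hcx | hdx
        · by_cases hx : x = a ∨ x = b
          · rcases hx with rfl | rfl
            · exact absurd hcx (Equiv.Perm.mem_support.1 hamem)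
            · exact Or.inr hdb
          · push_neg at hx
            left
            rw [Equiv.Perm.mul_apply, Equiv.swap_apply_of_ne_of_ne hx.1 hx.2, hcx]
        · exact Or.inr hdx
      have hsub : (c * Equiv.swap a b).support ⊆ insert b c.support := by
        intro x hx
        have hmoved := Equiv.Perm.mem_support.1 hx
        rw [Finset.mem_insert]
        by_contra hxc
        push_neg at hxc
        apply hmoved
        have hcx : c x = x := Equiv.Perm.notMem_support.1 hxc.2
        have hxa : x ≠ a := by rintro rfl; exact (Equiv.Perm.mem_support.1 hamem) hcx
        rw [Equiv.Perm.mul_apply, Equiv.swap_apply_of_ne_of_ne hxa hxc.1, hcx]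
      have hne1 : c * Equiv.swap a b ≠ 1 := by
        intro hone
        have h1 : (c * Equiv.swap a b) b = b := by rw [hone]; rfl
        rw [Equiv.Perm.mul_apply, Equiv.swap_apply_right, hca] at h1
        exact hgab h1
      have e1 := cc_disjoint hdiscτ
      rw [← hprod] at e1
      have e6 : (c * Equiv.swap a b).support.card ≤ c.support.card + 1 :=
        le_trans (Finset.card_le_card hsub) (Finset.card_insert_le b c.support)
      have e7 := cc_ge' hne1
      omega
    · obtain ⟨c₂, e, hd2, hdis2, hcyc2, hc2b, hmem2, he⟩ := decomp d hdb
      have hbmem2 : b ∈ c₂.support := (hmem2 b).2 ⟨Equiv.Perm.SameCycle.refl d b, hdb⟩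
      have hea : e a = a := by
        rw [he]
        split
        · rfl
        · exact hda
      have heb : e b = b := by rw [he, if_pos (Equiv.Perm.SameCycle.refl d b)]
      have hsupp_e_sub : ∀ x, e x ≠ x → d x ≠ x := by
        intro x hex
        rw [he x] at hex
        split at hex
        · exact absurd rfl hex
        · exact hex
      have hdiseτ : Disjoint e (Equiv.swap a b) := by
        intro x
        by_cases hx : x = a ∨ x = b
        · rcases hx with rfl | rfl
          · exact Or.inl hea
          · exact Or.inl heb
        · push_neg at hx; exact Or.inr (Equiv.swap_apply_of_ne_of_ne hx.1 hx.2)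
      have hprod : g * Equiv.swap a b = (c * c₂ * Equiv.swap a b) * e := by
        rw [hg, hd2, ← mul_assoc, mul_assoc (c * c₂) e (Equiv.swap a b),
          hdiseτ.commute.eq, ← mul_assoc]
      have hcamem : a ∉ c₂.support := by
        intro h
        exact ((hmem2 a).1 h).2 hda
      have hc2a : c₂ a = a := Equiv.Perm.notMem_support.1 hcamem
      have hdissum : Disjoint (c * c₂ * Equiv.swap a b) e := by
        intro x
        by_cases hex : e x = x
        · exact Or.inr hex
        · left
          have hdx : d x ≠ x := hsupp_e_sub x hex
          have hcx : c x = x := (hdis x).resolve_right hdx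
          have hc2x : c₂ x = x := (hdis2 x).resolve_right hex
          have hxa : x ≠ a := by rintro rfl; exact hex hea
          have hxb : x ≠ b := by rintro rfl; exact hex heb
          rw [Equiv.Perm.mul_apply, Equiv.Perm.mul_apply,
            Equiv.swap_apply_of_ne_of_ne hxa hxb, hc2x, hcx]
      have hsub : (c * c₂ * Equiv.swap a b).support ⊆ c.support ∪ c₂.support := by
        intro x hx
        have hmoved := Equiv.Perm.mem_support.1 hx
        rw [Finset.mem_union]
        by_contra hxc
        push_neg at hxc
        apply hmoved
        have hcx : c x = x := Equiv.Perm.notMem_support.1 hxc.1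
        have hc2x : c₂ x = x := Equiv.Perm.notMem_support.1 hxc.2
        have hxa : x ≠ a := by rintro rfl; exact (Equiv.Perm.mem_support.1 hamem) hcx
        have hxb : x ≠ b := by rintro rfl; exact (Equiv.Perm.mem_support.1 hbmem2) hc2x
        rw [Equiv.Perm.mul_apply, Equiv.Perm.mul_apply,
          Equiv.swap_apply_of_ne_of_ne hxa hxb, hc2x, hcx]
      have hne1 : c * c₂ * Equiv.swap a b ≠ 1 := by
        intro hone
        have h1 : (c * c₂ * Equiv.swap a b) b = b := by rw [hone]; rfl
        rw [Equiv.Perm.mul_apply, Equiv.Perm.mul_apply, Equiv.swap_apply_right,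
          hc2a, hca] at h1
        exact hgab h1
      have e1 := cc_disjoint hdissum
      rw [← hprod] at e1
      have e2' := cc_disjoint hdis2
      rw [← hd2] at e2'
      have e3' := cc_cycle hcyc2
      have e6 : (c * c₂ * Equiv.swap a b).support.card ≤ c.support.card + c₂.support.card :=
        le_trans (Finset.card_le_card hsub) (Finset.card_union_le _ _)
      have e7 := cc_ge' hne1
      have e8 := hcyc2.two_le_card_support
      have e9 := supp_le c₂
      omega

lemma cc_swap_le (g : Perm β) {a b : β} (hab : a ≠ b) :
    cycleCount g ≤ cycleCount (g * Equiv.swap a b) + 1 := by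
  by_cases hga : g a = a
  · by_cases hgb : g b = b
    · have hdis : Disjoint g (Equiv.swap a b) := by
        intro x
        by_cases hx : x = a ∨ x = b
        · rcases hx with rfl | rfl
          · exact Or.inl hga
          · exact Or.inl hgb
        · push_neg at hx; exact Or.inr (Equiv.swap_apply_of_ne_of_ne hx.1 hx.2)
      have e1 := cc_disjoint hdis
      have e2 := cc_cycle (Equiv.Perm.isCycle_swap hab)
      rw [Equiv.Perm.support_swap hab, Finset.card_pair hab] at e2
      omega
    · rw [Equiv.swap_comm]
      exact cc_swap_le_key g hab.symm hgb
  · exact cc_swap_le_key g hab hga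

lemma cc_insert (g : Perm β) {a b : β} (hab : a ≠ b) (hb : g b = b) :
    cycleCount (g * Equiv.swap a b) + 1 = cycleCount g := by
  have h1 := cc_swap_le g hab
  have hha : (g * Equiv.swap a b) a = b := by
    rw [Equiv.Perm.mul_apply, Equiv.swap_apply_left, hb]
  have hrem := cc_removal (g * Equiv.swap a b) (a := a) (by rw [hha]; exact hab.symm)
  rw [hha] at hrem
  have hback : (g * Equiv.swap a b) * Equiv.swap a b = g := by
    rw [mul_assoc, Equiv.swap_mul_self, mul_one]
  rw [hback] at hrem
  omega

lemma cc_prod_le : ∀ l : List (Perm β), (∀ τ ∈ l, ∃ a b, a ≠ b ∧ τ = Equiv.swap a b) →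
    ∀ x : Perm β, cycleCount x ≤ cycleCount (x * l.prod) + l.length := by
  intro l
  induction l with
  | nil => intro _ x; simp
  | cons τ t ih =>
    intro hl x
    obtain ⟨a, b, hab, rfl⟩ := hl _ List.mem_cons_self
    have h1 := cc_swap_le x hab
    have h2 := ih (fun τ' hτ' => hl τ' (List.mem_cons_of_mem _ hτ')) (x * Equiv.swap a b)
    rw [List.prod_cons, ← mul_assoc]
    simp only [List.length_cons]
    omega

lemma swap_list : ∀ (m : ℕ) (g : Perm β), g.support.card ≤ m →
    ∃ l : List (Perm β), (∀ τ ∈ l, ∃ a b, a ≠ b ∧ τ = Equiv.swap a b) ∧ l.prod = g ∧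
      l.length + cycleCount g ≤ Fintype.card β := by
  intro m
  induction m with
  | zero =>
    intro g hg
    have hg1 : g = 1 := Equiv.Perm.card_support_eq_zero.1 (Nat.le_zero.1 hg)
    subst hg1
    exact ⟨[], by simp, by simp, by rw [cc_one]; simp⟩
  | succ m ih =>
    intro g hg
    by_cases h1 : g = 1
    · subst h1; exact ⟨[], by simp, by simp, by rw [cc_one]; simp⟩
    · have hpos : 0 < g.support.card :=
        Nat.pos_of_ne_zero fun h => h1 (Equiv.Perm.card_support_eq_zero.1 h)
      obtain ⟨a, ha⟩ := Finset.card_pos.1 hpos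
      have hga : g a ≠ a := Equiv.Perm.mem_support.1 ha
      have hsub : (Equiv.swap a (g a) * g).support ⊆ g.support.erase a := by
        intro x hx
        have hmoved := Equiv.Perm.mem_support.1 hx
        rw [Finset.mem_erase]
        constructor
        · rintro rfl
          exact hmoved (by rw [Equiv.Perm.mul_apply, Equiv.swap_apply_right])
        · by_contra hxg
          apply hmoved
          have hgx : g x = x := Equiv.Perm.notMem_support.1 hxg
          have hxa : x ≠ a := by rintro rfl; exact hga hgx
          have hxga : x ≠ g a := by
            rintro rfl
            exact (Equiv.Perm.mem_support.1 ((Equiv.Perm.apply_mem_support).2 ha)) hgx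
          rw [Equiv.Perm.mul_apply, hgx, Equiv.swap_apply_of_ne_of_ne hxa hxga]
      have hcard : (Equiv.swap a (g a) * g).support.card ≤ m := by
        have h2 := Finset.card_le_card hsub
        rw [Finset.card_erase_of_mem ha] at h2
        omega
      obtain ⟨l, hl1, hl2, hl3⟩ := ih _ hcard
      refine ⟨Equiv.swap a (g a) :: l, ?_, ?_, ?_⟩
      · intro τ' hτ'
        rcases List.mem_cons.1 hτ' with rfl | hmem
        · exact ⟨a, g a, fun h => hga h.symm, rfl⟩
        · exact hl1 τ' hmem
      · rw [List.prod_cons, hl2, ← mul_assoc, Equiv.swap_mul_self, one_mul]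
      · simp only [List.length_cons]
        have hkey := cc_removal_left g hga
        omega

lemma cc_triangle (x y : Perm β) :
    cycleCount x + cycleCount y ≤ Fintype.card β + cycleCount (x * y) := by
  obtain ⟨l, hl1, hl2, hl3⟩ := swap_list y.support.card y le_rfl
  have h := cc_prod_le l hl1 x
  rw [hl2] at h
  omega

lemma cc_extendDomain {β' : Type*} [Fintype β'] [DecidableEq β'] {p : β' → Prop}
    [DecidablePred p] (f : β ≃ Subtype p) (g : Perm β) :
    cycleCount (g.extendDomain f) + Fintype.card β = cycleCount g + Fintype.card β' := by
  have h1 := cc_plus (g.extendDomain f)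
  have h2 := cc_plus g
  rw [Equiv.Perm.cycleType_extendDomain, Equiv.Perm.card_support_extend_domain] at h1
  have := supp_le g
  omega

lemma units_pow_parity {a b : ℕ} (h : (-1 : ℤˣ) ^ a = (-1 : ℤˣ) ^ b) : a % 2 = b % 2 := by
  rcases Nat.even_or_odd a with ha | ha <;> rcases Nat.even_or_odd b with hb | hb
  · rw [Nat.even_iff] at *; omega
  · rw [ha.neg_one_pow, hb.neg_one_pow] at h; exact absurd h (by decide)
  · rw [ha.neg_one_pow, hb.neg_one_pow] at h; exact absurd h (by decide)
  · rw [Nat.odd_iff] at *; omega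

lemma main1 (m : ℕ) (α : Perm (Fin (2 * m + 2))) (hinv : ∀ x, α (α x) = x)
    (hne : ∀ x, α x ≠ x) :
    ∃ G : ℕ, cycleCount (α * finRotate (2 * m + 2)) + 2 * G = m + 2 := by
  have hcard : Fintype.card (Fin (2 * m + 2)) = 2 * m + 2 := Fintype.card_fin _
  have hα2 : α * α = 1 := by
    ext x
    simp [Equiv.Perm.mul_apply, hinv x]
  have hord : orderOf α ∣ 2 := orderOf_dvd_of_pow_eq_one (by rw [pow_two]; exact hα2)
  have hct : ∀ c ∈ α.cycleType, c = 2 := by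
    intro c hc
    have h1 : c ∣ 2 :=
      dvd_trans (Multiset.dvd_lcm hc) (by rw [Equiv.Perm.lcm_cycleType]; exact hord)
    have h2 := Equiv.Perm.two_le_of_mem_cycleType hc
    have h3 : c ≤ 2 := Nat.le_of_dvd (by norm_num) h1
    omega
  have hsupp : α.support = Finset.univ := by
    rw [Finset.eq_univ_iff_forall]
    intro x
    exact Equiv.Perm.mem_support.2 (hne x)
  have hsum := Equiv.Perm.sum_cycleType α
  rw [hsupp, Finset.card_univ, hcard] at hsum
  have hrepl : α.cycleType = Multiset.replicate (Multiset.card α.cycleType) 2 :=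
    Multiset.eq_replicate_card.2 hct
  have hcardct : Multiset.card α.cycleType = m + 1 := by
    have h4 : α.cycleType.sum = Multiset.card α.cycleType * 2 := by
      conv_lhs => rw [hrepl]
      rw [Multiset.sum_replicate, smul_eq_mul]
    omega
  have hccα : cycleCount α = m + 1 := by
    have h5 := cc_plus α
    rw [hsupp, Finset.card_univ, hcard, hcardct] at h5
    omega
  have hrot_cycle : IsCycle (finRotate (2 * m + 2)) := isCycle_finRotate (n := 2 * m)
  have hrot_supp : (finRotate (2 * m + 2)).support = Finset.univ := support_finRotate (n := 2 * m)
  have hccrot : cycleCount (finRotate (2 * m + 2)) = 1 := by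
    have h6 := cc_cycle hrot_cycle
    rw [hrot_supp, Finset.card_univ, hcard] at h6
    omega
  have htri := cc_triangle α (α * finRotate (2 * m + 2))
  rw [← mul_assoc, hα2, one_mul, hccrot, hccα, hcard] at htri
  have hsf : Equiv.Perm.sign (finRotate (2 * m + 2)) = (-1 : ℤˣ) ^ (2 * m + 1) :=
    (sign_finRotate (2 * m + 2)).trans (by rfl)
  have hsign : Equiv.Perm.sign (α * finRotate (2 * m + 2)) =
      Equiv.Perm.sign α * Equiv.Perm.sign (finRotate (2 * m + 2)) :=
    map_mul Equiv.Perm.sign α (finRotate (2 * m + 2))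
  rw [Equiv.Perm.sign_of_cycleType (α * finRotate (2 * m + 2)),
    Equiv.Perm.sign_of_cycleType α, hsf, hsum, hcardct, ← pow_add] at hsign
  have hparity := units_pow_parity hsign
  have hsumσ := Equiv.Perm.sum_cycleType (α * finRotate (2 * m + 2))
  have hplus := cc_plus (α * finRotate (2 * m + 2))
  rw [hcard] at hplus
  have hsupple := supp_le (α * finRotate (2 * m + 2))
  rw [hcard] at hsupple
  refine ⟨(m + 2 - cycleCount (α * finRotate (2 * m + 2))) / 2, ?_⟩
  omega

end CCAux

open Equiv Equiv.Perm in
lemma rot_lt {m : ℕ} (j : Fin (m+2)) (h : (j:ℕ) < m+1) :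
    finRotate (m+2) j = ⟨(j:ℕ)+1, by omega⟩ :=
  finRotate_of_lt (n := m+1) (k := (j:ℕ)) h

open Equiv Equiv.Perm in
lemma rot_last {m : ℕ} : finRotate (m+2) ⟨m+1, by omega⟩ = ⟨0, by omega⟩ :=
  finRotate_last'

lemma glue2_zero (k : ℕ) : glue2 k 0 = 0 := if_pos rfl

lemma glue2_pos {k j : ℕ} (h : j ≠ 0) : glue2 k j = j + (2*k+2) := if_neg h

lemma glue2_lt {n k : ℕ} (hkn : k ≤ n) (j : ℕ) (hj : j < 2*(n-k)+2) :
    glue2 k j < 2*(n+1)+2 := by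
  unfold glue2; split <;> omega

lemma glue2_inj {k a b : ℕ} (h : glue2 k a = glue2 k b) : a = b := by
  unfold glue2 at h; split_ifs at h <;> omega

lemma glue2_mem (k j : ℕ) : glue2 k j = 0 ∨ 2*k+3 ≤ glue2 k j := by
  unfold glue2; split <;> omega

/-- Let `u` be a planted unicellular map of genus `g+1` with `n+1` edges,
of class III: every half-edge strictly between `1` (index `1` in boundary order) and
`α(1)` satisfies `α(k) < α(1)` (hypothesis `hIII`).  Cutting the edge `{1, α(1)}` — that
is, restricting `α` to `H₁ = {1,…,α(1)}` (positions `1,…,2k+2`, with the cut edge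
becoming the rainbow of `u₁`) and to its complement `H₂`, and splitting the vertex
containing `α(1)` accordingly — produces two planted unicellular maps `u₁` and `u₂`
with `k` and `n-k` edges respectively (where `α(1)` is the last half-edge of `H₁`, a
set of `2k+2` half-edges), whose genera `g₁, g₂` satisfy `g₁ + g₂ = g + 1`.  The
conclusion records `u₁, u₂` through the gluing equations identifying their half-edges
inside `u`. -/
theorem stmt7 (g n k : ℕ) (u : PUMap (g + 1) (n + 1))
    (hIII : ∀ j : Fin (2 * (n + 1) + 2), 1 < (j : ℕ) → j < u.α ⟨1, by omega⟩ →
      u.α j < u.α ⟨1, by omega⟩)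
    (hk : (u.α ⟨1, by omega⟩ : ℕ) = 2 * k + 2) :
    ∃ (g₁ g₂ : ℕ) (u₁ : PUMap g₁ k) (u₂ : PUMap g₂ (n - k)),
      g₁ + g₂ = g + 1 ∧
      (∀ (i : Fin (2 * k + 2)) (x y : Fin (2 * (n + 1) + 2)),
        (x : ℕ) = (i : ℕ) + 1 → (y : ℕ) = (u₁.α i : ℕ) + 1 → u.α x = y) ∧
      (∀ (i : Fin (2 * (n - k) + 2)) (x y : Fin (2 * (n + 1) + 2)),
        (x : ℕ) = glue2 k i → (y : ℕ) = glue2 k (u₂.α i) → u.α x = y) := by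
  obtain ⟨α, σu, hprop⟩ := u
  unfold IsPUMap at hprop
  obtain ⟨hα2, hαne, hα0, hprodu, hgeq⟩ := hprop
  dsimp only at hIII hk ⊢
  -- the ℕ-level function A
  set A : ℕ → ℕ := fun v =>
    ((α ⟨v % (2*(n+1)+2), Nat.mod_lt v (by omega)⟩ : Fin (2*(n+1)+2)) : ℕ) with hA
  have hAfin : ∀ (v : ℕ) (hv : v < 2*(n+1)+2),
      A v = ((α ⟨v, hv⟩ : Fin (2*(n+1)+2)) : ℕ) := by
    intro v hv
    rw [hA]
    exact congrArg (fun t => ((α t : Fin (2*(n+1)+2)) : ℕ))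
      (Fin.ext (Nat.mod_eq_of_lt hv))
  have hAdef : ∀ x : Fin (2*(n+1)+2), A (x : ℕ) = ((α x : Fin (2*(n+1)+2)) : ℕ) := by
    intro x
    rw [hAfin (x:ℕ) x.isLt]
  have hAlt : ∀ v, v < 2*(n+1)+2 → A v < 2*(n+1)+2 := by
    intro v hv
    rw [hAfin v hv]
    exact (α ⟨v, hv⟩).isLt
  have hAA : ∀ v, v < 2*(n+1)+2 → A (A v) = v := by
    intro v hv
    rw [hAfin v hv, hAdef (α ⟨v, hv⟩), hα2 ⟨v, hv⟩]
  have hAne : ∀ v, v < 2*(n+1)+2 → A v ≠ v := by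
    intro v hv h
    apply hαne ⟨v, hv⟩
    apply Fin.ext
    rw [← hAfin v hv, h]
  have hA0 : A 0 = 2*(n+1)+1 := by
    rw [hAfin 0 (by omega), hα0]
  have hAk : A 1 = 2*k+2 := by
    rw [hAfin 1 (by omega)]
    exact hk
  have hkn : k ≤ n := by
    have h1 := hAlt 1 (by omega)
    omega
  have hα1v : ∀ h : (1:ℕ) < 2*(n+1)+2, ((α ⟨1, h⟩ : Fin (2*(n+1)+2)) : ℕ) = 2*k+2 :=
    fun _ => hk
  have hH1 : ∀ v, 1 ≤ v → v ≤ 2*k+2 → 1 ≤ A v ∧ A v ≤ 2*k+2 := by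
    intro v h1 h2
    by_cases hv1 : v = 1
    · subst hv1; rw [hAk]; omega
    · by_cases hv2 : v = 2*k+2
      · subst hv2
        have h3 : A (2*k+2) = 1 := by rw [← hAk]; exact hAA 1 (by omega)
        rw [h3]; omega
      · have hlt : v < 2*(n+1)+2 := by omega
        have h3 := hIII ⟨v, hlt⟩ (by show 1 < v; omega)
          (by rw [Fin.lt_def]
              show v < ((α ⟨1, by omega⟩ : Fin (2*(n+1)+2)) : ℕ)
              rw [hα1v]; omega)
        rw [Fin.lt_def] at h3
        have h4 : A v < 2*k+2 := by
          rw [hAfin v hlt]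
          calc ((α ⟨v, hlt⟩ : Fin (2*(n+1)+2)) : ℕ)
              < ((α ⟨1, _⟩ : Fin (2*(n+1)+2)) : ℕ) := h3
            _ = 2*k+2 := hα1v _
        have h5 : A v ≠ 0 := by
          intro h0
          have h6 := hAA v hlt
          rw [h0, hA0] at h6
          omega
        omega
  have hH2 : ∀ v, v < 2*(n+1)+2 → (v = 0 ∨ 2*k+3 ≤ v) → (A v = 0 ∨ 2*k+3 ≤ A v) := by
    intro v hv hmem
    by_contra hcon
    push_neg at hcon
    have h1 := hH1 (A v) (by omega) (by omega)
    rw [hAA v hv] at h1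
    omega
  -- construction of α₁
  have hb1 : ∀ i : Fin (2*k+2), (i:ℕ)+1 < 2*(n+1)+2 := fun i => by
    have := i.isLt; omega
  obtain ⟨α₁, hα₁, hα₁inv⟩ :
      ∃ α₁ : Equiv.Perm (Fin (2*k+2)),
        (∀ i, ((α₁ i : Fin (2*k+2)) : ℕ) + 1 = A ((i:ℕ)+1)) ∧
        (∀ i, α₁ (α₁ i) = i) := by
    have hbound : ∀ i : Fin (2*k+2), A ((i:ℕ)+1) - 1 < 2*k+2 := by
      intro i
      have h := hH1 ((i:ℕ)+1) (by omega) (by have := i.isLt; omega)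
      omega
    set f : Fin (2*k+2) → Fin (2*k+2) := fun i => ⟨A ((i:ℕ)+1) - 1, hbound i⟩ with hf
    have hfval : ∀ i, ((f i : Fin (2*k+2)) : ℕ) + 1 = A ((i:ℕ)+1) := by
      intro i
      have h := hH1 ((i:ℕ)+1) (by omega) (by have := i.isLt; omega)
      rw [hf]
      show A ((i:ℕ)+1) - 1 + 1 = A ((i:ℕ)+1)
      omega
    have hff : ∀ i, f (f i) = i := by
      intro i
      have h1 := hfval i
      have h2 := hfval (f i)
      rw [h1] at h2
      rw [hAA ((i:ℕ)+1) (hb1 i)] at h2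
      exact Fin.ext (by omega)
    exact ⟨⟨f, f, hff, hff⟩, hfval, hff⟩
  have hα₁ne : ∀ x, α₁ x ≠ x := by
    intro x h
    have h1 := hα₁ x
    rw [h] at h1
    exact hAne ((x:ℕ)+1) (hb1 x) h1.symm
  have z0 : (0:ℕ) < 2*k+2 := by omega
  have hα₁0v : ((α₁ ⟨0, z0⟩ : Fin (2*k+2)) : ℕ) = 2*k+1 := by
    have h1 := hα₁ ⟨0, z0⟩
    rw [show ((⟨0, z0⟩ : Fin (2*k+2)) : ℕ) + 1 = 1 from rfl, hAk] at h1
    omega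
  have hα₁0 : α₁ ⟨0, z0⟩ = ⟨2*k+1, by omega⟩ := Fin.ext hα₁0v
  obtain ⟨g₁, hg₁⟩ := CCAux.main1 k α₁ hα₁inv hα₁ne
  have hpu1 : IsPUMap g₁ k α₁ (α₁ * finRotate (2*k+2)) := by
    unfold IsPUMap
    refine ⟨hα₁inv, hα₁ne, hα₁0, ?_, ?_⟩
    · rw [← mul_assoc]
      have h1 : α₁ * α₁ = 1 := by
        apply Equiv.ext
        intro x
        rw [Equiv.Perm.mul_apply, hα₁inv x, Equiv.Perm.one_apply]
      rw [h1, one_mul]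
    · omega
  -- construction of α₂
  have hb2 : ∀ j : Fin (2*(n-k)+2), glue2 k (j:ℕ) < 2*(n+1)+2 :=
    fun j => glue2_lt hkn _ j.isLt
  obtain ⟨α₂, hα₂, hα₂inv⟩ :
      ∃ α₂ : Equiv.Perm (Fin (2*(n-k)+2)),
        (∀ j, glue2 k ((α₂ j : Fin (2*(n-k)+2)) : ℕ) = A (glue2 k (j:ℕ))) ∧
        (∀ j, α₂ (α₂ j) = j) := by
    have hmem2 : ∀ j : Fin (2*(n-k)+2),
        A (glue2 k (j:ℕ)) = 0 ∨ 2*k+3 ≤ A (glue2 k (j:ℕ)) :=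
      fun j => hH2 _ (hb2 j) (glue2_mem k (j:ℕ))
    have hbound : ∀ j : Fin (2*(n-k)+2),
        (if A (glue2 k (j:ℕ)) = 0 then 0 else A (glue2 k (j:ℕ)) - (2*k+2)) < 2*(n-k)+2 := by
      intro j
      have h1 := hAlt (glue2 k (j:ℕ)) (hb2 j)
      rcases hmem2 j with h | h
      · rw [if_pos h]; omega
      · rw [if_neg (by omega)]; omega
    set f2 : Fin (2*(n-k)+2) → Fin (2*(n-k)+2) := fun j =>
      ⟨if A (glue2 k (j:ℕ)) = 0 then 0 else A (glue2 k (j:ℕ)) - (2*k+2), hbound j⟩ with hf2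
    have hf2val : ∀ j, glue2 k ((f2 j : Fin (2*(n-k)+2)) : ℕ) = A (glue2 k (j:ℕ)) := by
      intro j
      have h1 := hmem2 j
      rw [hf2]
      show glue2 k (if A (glue2 k (j:ℕ)) = 0 then 0 else A (glue2 k (j:ℕ)) - (2*k+2))
        = A (glue2 k (j:ℕ))
      rcases h1 with h | h
      · rw [if_pos h, h, glue2_zero]
      · rw [if_neg (by omega),
          glue2_pos (show A (glue2 k (j:ℕ)) - (2*k+2) ≠ 0 by omega)]
        omega
    have hf2f2 : ∀ j, f2 (f2 j) = j := by
      intro j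
      have h1 := hf2val j
      have h2 := hf2val (f2 j)
      rw [h1, hAA _ (hb2 j)] at h2
      exact Fin.ext (glue2_inj h2)
    exact ⟨⟨f2, f2, hf2f2, hf2f2⟩, hf2val, hf2f2⟩
  have hα₂ne : ∀ x, α₂ x ≠ x := by
    intro x h
    have h1 := hα₂ x
    rw [h] at h1
    exact hAne (glue2 k (x:ℕ)) (hb2 x) h1.symm
  have zM : (0:ℕ) < 2*(n-k)+2 := by omega
  have hα₂0v : ((α₂ ⟨0, zM⟩ : Fin (2*(n-k)+2)) : ℕ) = 2*(n-k)+1 := by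
    have h1 := hα₂ ⟨0, zM⟩
    rw [show glue2 k ((⟨0, zM⟩ : Fin (2*(n-k)+2)) : ℕ) = 0 from glue2_zero k,
      hA0] at h1
    have h3 : glue2 k (2*(n-k)+1) = 2*(n+1)+1 := by
      rw [glue2_pos (by omega)]
      omega
    exact glue2_inj (h1.trans h3.symm)
  have hα₂0 : α₂ ⟨0, zM⟩ = ⟨2*(n-k)+1, by omega⟩ := Fin.ext hα₂0v
  obtain ⟨g₂, hg₂⟩ := CCAux.main1 (n-k) α₂ hα₂inv hα₂ne
  have hpu2 : IsPUMap g₂ (n-k) α₂ (α₂ * finRotate (2*(n-k)+2)) := by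
    unfold IsPUMap
    refine ⟨hα₂inv, hα₂ne, hα₂0, ?_, ?_⟩
    · rw [← mul_assoc]
      have h1 : α₂ * α₂ = 1 := by
        apply Equiv.ext
        intro x
        rw [Equiv.Perm.mul_apply, hα₂inv x, Equiv.Perm.one_apply]
      rw [h1, one_mul]
    · omega
  -- permutation spec lemmas
  have hσ₁a : ∀ (j : Fin (2*k+2)) (w : ℕ), (j:ℕ) < 2*k+1 → w = (j:ℕ)+2 →
      (((α₁ * finRotate (2*k+2)) j : Fin (2*k+2)) : ℕ) + 1 = A w := by
    intro j w hj hw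
    subst hw
    rw [Equiv.Perm.mul_apply, rot_lt (m := 2*k) j (by omega)]
    exact hα₁ ⟨(j:ℕ)+1, by have := j.isLt; omega⟩
  have q1 : 2*k+1 < 2*k+2 := by omega
  have hσ₁b : (((α₁ * finRotate (2*k+2)) ⟨2*k+1, q1⟩ : Fin (2*k+2)) : ℕ) = 2*k+1 := by
    rw [Equiv.Perm.mul_apply, rot_last (m := 2*k)]
    exact hα₁0v
  have hσ₂a : ∀ (j : Fin (2*(n-k)+2)) (w : ℕ), (j:ℕ) < 2*(n-k)+1 → w = glue2 k ((j:ℕ)+1) →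
      glue2 k (((α₂ * finRotate (2*(n-k)+2)) j : Fin (2*(n-k)+2)) : ℕ) = A w := by
    intro j w hj hw
    subst hw
    rw [Equiv.Perm.mul_apply, rot_lt (m := 2*(n-k)) j (by omega)]
    exact hα₂ ⟨(j:ℕ)+1, by have := j.isLt; omega⟩
  have zl : 2*(n-k)+1 < 2*(n-k)+2 := by omega
  have hσ₂b : (((α₂ * finRotate (2*(n-k)+2)) ⟨2*(n-k)+1, zl⟩ : Fin (2*(n-k)+2)) : ℕ)
      = 2*(n-k)+1 := by
    rw [Equiv.Perm.mul_apply, rot_last (m := 2*(n-k))]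
    exact hα₂0v
  -- embedding equivs
  obtain ⟨f₁E, hf₁E, hf₁Es⟩ :
      ∃ e : Fin (2*k+2) ≃ {x : Fin (2*(n+1)+2) // 1 ≤ (x:ℕ) ∧ (x:ℕ) ≤ 2*k+2},
        (∀ i, (((e i).1 : Fin (2*(n+1)+2)) : ℕ) = (i:ℕ)+1) ∧
        (∀ s, ((e.symm s : Fin (2*k+2)) : ℕ) = ((s.1 : Fin (2*(n+1)+2)) : ℕ) - 1) := by
    refine ⟨Equiv.mk
      (fun i => ⟨⟨(i:ℕ)+1, hb1 i⟩, by
        refine ⟨by show (1:ℕ) ≤ (i:ℕ)+1; omega, ?_⟩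
        have := i.isLt
        show (i:ℕ)+1 ≤ 2*k+2
        omega⟩)
      (fun s => ⟨((s.1 : Fin (2*(n+1)+2)) : ℕ) - 1, by have := s.2; omega⟩)
      ?_ ?_, fun i => rfl, fun s => rfl⟩
    · intro i
      apply Fin.ext
      show ((i:ℕ)+1) - 1 = (i:ℕ)
      omega
    · intro s
      apply Subtype.ext
      apply Fin.ext
      show (((s.1 : Fin (2*(n+1)+2)) : ℕ) - 1) + 1 = ((s.1 : Fin (2*(n+1)+2)) : ℕ)
      have := s.2.1
      omega
  obtain ⟨f₂E, hf₂E, hf₂Es⟩ :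
      ∃ e : Fin (2*(n-k)+2) ≃ {x : Fin (2*(n+1)+2) // (x:ℕ) = 0 ∨ 2*k+3 ≤ (x:ℕ)},
        (∀ j, (((e j).1 : Fin (2*(n+1)+2)) : ℕ) = glue2 k (j:ℕ)) ∧
        (∀ s, ((e.symm s : Fin (2*(n-k)+2)) : ℕ)
          = if ((s.1 : Fin (2*(n+1)+2)) : ℕ) = 0 then 0
            else ((s.1 : Fin (2*(n+1)+2)) : ℕ) - (2*k+2)) := by
    refine ⟨Equiv.mk
      (fun j => ⟨⟨glue2 k (j:ℕ), hb2 j⟩, glue2_mem k (j:ℕ)⟩)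
      (fun s => ⟨if ((s.1 : Fin (2*(n+1)+2)) : ℕ) = 0 then 0
          else ((s.1 : Fin (2*(n+1)+2)) : ℕ) - (2*k+2), by
        have h2 := (s.1 : Fin (2*(n+1)+2)).isLt
        rcases s.2 with h | h
        · rw [if_pos h]; omega
        · rw [if_neg (by omega)]; omega⟩)
      ?_ ?_, fun j => rfl, fun s => rfl⟩
    · intro j
      apply Fin.ext
      show (if glue2 k (j:ℕ) = 0 then 0 else glue2 k (j:ℕ) - (2*k+2)) = (j:ℕ)
      by_cases h0 : (j:ℕ) = 0
      · rw [h0, glue2_zero, if_pos rfl]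
      · rw [glue2_pos h0, if_neg (by omega)]
        omega
    · intro s
      apply Subtype.ext
      apply Fin.ext
      show glue2 k (if ((s.1 : Fin (2*(n+1)+2)) : ℕ) = 0 then 0
          else ((s.1 : Fin (2*(n+1)+2)) : ℕ) - (2*k+2)) = ((s.1 : Fin (2*(n+1)+2)) : ℕ)
      have h2 := (s.1 : Fin (2*(n+1)+2)).isLt
      rcases s.2 with h | h
      · rw [if_pos h, glue2_zero, h]
      · rw [if_neg (by omega), glue2_pos (by omega)]
        omega
  -- extended permutations
  have hπ₁fix : ∀ x : Fin (2*(n+1)+2), ¬(1 ≤ (x:ℕ) ∧ (x:ℕ) ≤ 2*k+2) →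
      ((α₁ * finRotate (2*k+2)).extendDomain f₁E) x = x :=
    fun x h => Equiv.Perm.extendDomain_apply_not_subtype _ f₁E h
  have hπ₂fix : ∀ x : Fin (2*(n+1)+2), ¬((x:ℕ) = 0 ∨ 2*k+3 ≤ (x:ℕ)) →
      ((α₂ * finRotate (2*(n-k)+2)).extendDomain f₂E) x = x :=
    fun x h => Equiv.Perm.extendDomain_apply_not_subtype _ f₂E h
  have hπ₁app : ∀ (x : Fin (2*(n+1)+2)) (j : Fin (2*k+2)), (x:ℕ) = (j:ℕ)+1 →
      ((((α₁ * finRotate (2*k+2)).extendDomain f₁E) x : Fin (2*(n+1)+2)) : ℕ)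
        = (((α₁ * finRotate (2*k+2)) j : Fin (2*k+2)) : ℕ) + 1 := by
    intro x j hxj
    have hx : 1 ≤ (x:ℕ) ∧ (x:ℕ) ≤ 2*k+2 := ⟨by omega, by have := j.isLt; omega⟩
    rw [Equiv.Perm.extendDomain_apply_subtype _ f₁E hx]
    have h2 : f₁E.symm ⟨x, hx⟩ = j := by
      apply Fin.ext
      rw [hf₁Es ⟨x, hx⟩]
      show (x:ℕ) - 1 = (j:ℕ)
      omega
    rw [h2]
    exact hf₁E _
  have hπ₂app : ∀ (x : Fin (2*(n+1)+2)) (j : Fin (2*(n-k)+2))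
      (hx : (x:ℕ) = 0 ∨ 2*k+3 ≤ (x:ℕ)), (x:ℕ) = glue2 k (j:ℕ) →
      ((((α₂ * finRotate (2*(n-k)+2)).extendDomain f₂E) x : Fin (2*(n+1)+2)) : ℕ)
        = glue2 k (((α₂ * finRotate (2*(n-k)+2)) j : Fin (2*(n-k)+2)) : ℕ) := by
    intro x j hx hxj
    rw [Equiv.Perm.extendDomain_apply_subtype _ f₂E hx]
    have h2 : f₂E.symm ⟨x, hx⟩ = j := by
      apply Fin.ext
      rw [hf₂Es ⟨x, hx⟩]
      show (if (x:ℕ) = 0 then 0 else (x:ℕ) - (2*k+2)) = (j:ℕ)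
      rw [hxj]
      by_cases h0 : (j:ℕ) = 0
      · rw [h0, glue2_zero, if_pos rfl]
      · rw [glue2_pos h0, if_neg (by omega)]
        omega
    rw [h2]
    exact hf₂E _
  -- σu evaluation
  have hσua : ∀ x : Fin (2*(n+1)+2), (x:ℕ) < 2*(n+1)+1 →
      ((σu x : Fin (2*(n+1)+2)) : ℕ) = A ((x:ℕ)+1) := by
    intro x hx
    have h1 : α (σu x) = finRotate (2*(n+1)+2) x := by
      rw [← Equiv.Perm.mul_apply, hprodu]
    rw [rot_lt (m := 2*(n+1)) x (by omega)] at h1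
    have h2 : A ((σu x : Fin (2*(n+1)+2)) : ℕ) = (x:ℕ)+1 := by
      rw [hAdef (σu x), h1]
    have h3 := hAA ((σu x : Fin (2*(n+1)+2)) : ℕ) (σu x).isLt
    rw [h2] at h3
    exact h3.symm
  have pc : 2*(n+1)+1 < 2*(n+1)+2 := by omega
  have hσub : ((σu ⟨2*(n+1)+1, pc⟩ : Fin (2*(n+1)+2)) : ℕ) = 2*(n+1)+1 := by
    have h1 : α (σu ⟨2*(n+1)+1, pc⟩) = finRotate (2*(n+1)+2) ⟨2*(n+1)+1, pc⟩ := by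
      rw [← Equiv.Perm.mul_apply, hprodu]
    rw [rot_last (m := 2*(n+1))] at h1
    have h2 : A ((σu ⟨2*(n+1)+1, pc⟩ : Fin (2*(n+1)+2)) : ℕ) = 0 := by
      rw [hAdef, h1]
    have h3 := hAA ((σu ⟨2*(n+1)+1, pc⟩ : Fin (2*(n+1)+2)) : ℕ) (σu _).isLt
    rw [h2, hA0] at h3
    exact h3.symm
  have pa : (0:ℕ) < 2*(n+1)+2 := by omega
  have pb : 2*k+2 < 2*(n+1)+2 := by omega
  -- the decomposition identity
  have hdecomp : σu = ((α₁ * finRotate (2*k+2)).extendDomain f₁E) *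
      (((α₂ * finRotate (2*(n-k)+2)).extendDomain f₂E) *
        Equiv.swap (⟨0, pa⟩ : Fin (2*(n+1)+2)) ⟨2*k+2, pb⟩) := by
    apply Equiv.ext
    intro x
    rw [Equiv.Perm.mul_apply, Equiv.Perm.mul_apply]
    have hxlt := x.isLt
    by_cases h0 : (x:ℕ) = 0
    · have hx0 : x = ⟨0, pa⟩ := Fin.ext h0
      rw [hx0, Equiv.swap_apply_left]
      rw [hπ₂fix ⟨2*k+2, pb⟩ (by show ¬(2*k+2 = 0 ∨ 2*k+3 ≤ 2*k+2); omega)]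
      apply Fin.ext
      rw [hπ₁app ⟨2*k+2, pb⟩ ⟨2*k+1, q1⟩ (show 2*k+2 = 2*k+1+1 from rfl), hσ₁b,
        hσua ⟨0, pa⟩ (by show (0:ℕ) < 2*(n+1)+1; omega),
        show ((⟨0, pa⟩ : Fin (2*(n+1)+2)) : ℕ) + 1 = 1 from rfl, hAk]
    · by_cases h1 : (x:ℕ) ≤ 2*k+1
      · rw [Equiv.swap_apply_of_ne_of_ne (Fin.ne_of_val_ne (show (x:ℕ) ≠ 0 from h0))
          (Fin.ne_of_val_ne (show (x:ℕ) ≠ 2*k+2 by omega))]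
        rw [hπ₂fix x (by omega)]
        apply Fin.ext
        have hjlt : (x:ℕ)-1 < 2*k+2 := by omega
        rw [hπ₁app x ⟨(x:ℕ)-1, hjlt⟩ (by show (x:ℕ) = (x:ℕ)-1+1; omega)]
        have e2 := hσ₁a ⟨(x:ℕ)-1, hjlt⟩ ((x:ℕ)+1) (by show (x:ℕ)-1 < 2*k+1; omega)
          (by show (x:ℕ)+1 = ((x:ℕ)-1)+2; omega)
        rw [hσua x (by omega)]
        omega
      · by_cases h2 : (x:ℕ) = 2*k+2
        · have hxb : x = ⟨2*k+2, pb⟩ := Fin.ext h2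
          rw [hxb, Equiv.swap_apply_right]
          have e0 : ((⟨0, pa⟩ : Fin (2*(n+1)+2)) : ℕ)
              = glue2 k ((⟨0, zM⟩ : Fin (2*(n-k)+2)) : ℕ) := by
            rw [show ((⟨0, zM⟩ : Fin (2*(n-k)+2)) : ℕ) = 0 from rfl, glue2_zero]
          have eapp := hπ₂app ⟨0, pa⟩ ⟨0, zM⟩ (Or.inl rfl) e0
          have e2 := hσ₂a ⟨0, zM⟩ (2*k+3) (by show (0:ℕ) < 2*(n-k)+1; omega)
            (by rw [show ((⟨0, zM⟩ : Fin (2*(n-k)+2)) : ℕ) + 1 = 1 from rfl,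
                glue2_pos one_ne_zero]
                omega)
          have e3 := hH2 (2*k+3) (by omega) (by omega)
          rw [hπ₁fix _ (by omega)]
          apply Fin.ext
          rw [eapp, e2, hσua ⟨2*k+2, pb⟩ (by show 2*k+2 < 2*(n+1)+1; omega),
            show ((⟨2*k+2, pb⟩ : Fin (2*(n+1)+2)) : ℕ) + 1 = 2*k+3 from rfl]
        · by_cases h3 : (x:ℕ) ≤ 2*(n+1)
          · rw [Equiv.swap_apply_of_ne_of_ne (Fin.ne_of_val_ne h0) (Fin.ne_of_val_ne h2)]
            have hjlt : (x:ℕ)-(2*k+2) < 2*(n-k)+2 := by omega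
            have e0 : (x:ℕ) = glue2 k ((⟨(x:ℕ)-(2*k+2), hjlt⟩ : Fin (2*(n-k)+2)) : ℕ) := by
              rw [show ((⟨(x:ℕ)-(2*k+2), hjlt⟩ : Fin (2*(n-k)+2)) : ℕ)
                  = (x:ℕ)-(2*k+2) from rfl, glue2_pos (by omega)]
              omega
            have eapp := hπ₂app x ⟨(x:ℕ)-(2*k+2), hjlt⟩ (Or.inr (by omega)) e0
            have e2 := hσ₂a ⟨(x:ℕ)-(2*k+2), hjlt⟩ ((x:ℕ)+1)
              (by show (x:ℕ)-(2*k+2) < 2*(n-k)+1; omega)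
              (by rw [show ((⟨(x:ℕ)-(2*k+2), hjlt⟩ : Fin (2*(n-k)+2)) : ℕ) + 1
                  = (x:ℕ)-(2*k+2)+1 from rfl, glue2_pos (by omega)]
                  omega)
            have e3 := hH2 ((x:ℕ)+1) (by omega) (by omega)
            rw [hπ₁fix _ (by omega)]
            apply Fin.ext
            rw [eapp, e2, hσua x (by omega)]
          · have hxc : x = ⟨2*(n+1)+1, pc⟩ := Fin.ext (show (x:ℕ) = 2*(n+1)+1 by omega)
            rw [hxc, Equiv.swap_apply_of_ne_of_ne
              (Fin.ne_of_val_ne (show 2*(n+1)+1 ≠ 0 by omega))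
              (Fin.ne_of_val_ne (show 2*(n+1)+1 ≠ 2*k+2 by omega))]
            have e0 : ((⟨2*(n+1)+1, pc⟩ : Fin (2*(n+1)+2)) : ℕ)
                = glue2 k ((⟨2*(n-k)+1, zl⟩ : Fin (2*(n-k)+2)) : ℕ) := by
              rw [show ((⟨2*(n-k)+1, zl⟩ : Fin (2*(n-k)+2)) : ℕ) = 2*(n-k)+1 from rfl,
                glue2_pos (by omega)]
              omega
            have eapp := hπ₂app ⟨2*(n+1)+1, pc⟩ ⟨2*(n-k)+1, zl⟩
              (Or.inr (show 2*k+3 ≤ 2*(n+1)+1 by omega)) e0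
            have e2 : glue2 k (((α₂ * finRotate (2*(n-k)+2)) ⟨2*(n-k)+1, zl⟩
                : Fin (2*(n-k)+2)) : ℕ) = 2*(n+1)+1 := by
              rw [hσ₂b, glue2_pos (by omega)]
              omega
            have hfixv : (((α₂ * finRotate (2*(n-k)+2)).extendDomain f₂E) ⟨2*(n+1)+1, pc⟩
                : Fin (2*(n+1)+2)) = ⟨2*(n+1)+1, pc⟩ := by
              apply Fin.ext
              rw [eapp, e2]
            rw [hfixv, hπ₁fix _ (by show ¬(1 ≤ 2*(n+1)+1 ∧ 2*(n+1)+1 ≤ 2*k+2); omega)]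
            apply Fin.ext
            rw [hσub]
  -- disjointness and counting
  have hswne : (⟨0, pa⟩ : Fin (2*(n+1)+2)) ≠ ⟨2*k+2, pb⟩ :=
    Fin.ne_of_val_ne (show (0:ℕ) ≠ 2*k+2 by omega)
  have hπ₂b : ((α₂ * finRotate (2*(n-k)+2)).extendDomain f₂E) ⟨2*k+2, pb⟩ = ⟨2*k+2, pb⟩ :=
    hπ₂fix ⟨2*k+2, pb⟩ (by show ¬(2*k+2 = 0 ∨ 2*k+3 ≤ 2*k+2); omega)
  have hdisj : Equiv.Perm.Disjoint ((α₁ * finRotate (2*k+2)).extendDomain f₁E)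
      (((α₂ * finRotate (2*(n-k)+2)).extendDomain f₂E)
        * Equiv.swap (⟨0, pa⟩ : Fin (2*(n+1)+2)) ⟨2*k+2, pb⟩) := by
    intro x
    by_cases hm : 1 ≤ (x:ℕ) ∧ (x:ℕ) ≤ 2*k+1
    · right
      rw [Equiv.Perm.mul_apply,
        Equiv.swap_apply_of_ne_of_ne (Fin.ne_of_val_ne (show (x:ℕ) ≠ 0 by omega))
          (Fin.ne_of_val_ne (show (x:ℕ) ≠ 2*k+2 by omega)),
        hπ₂fix x (by omega)]
    · by_cases hm2 : (x:ℕ) = 2*k+2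
      · left
        have hxb : x = ⟨2*k+2, pb⟩ := Fin.ext hm2
        rw [hxb]
        apply Fin.ext
        rw [hπ₁app ⟨2*k+2, pb⟩ ⟨2*k+1, q1⟩ (show 2*k+2 = 2*k+1+1 from rfl), hσ₁b]
      · left
        exact hπ₁fix x (by omega)
  have hccπ₁ := CCAux.cc_extendDomain f₁E (α₁ * finRotate (2*k+2))
  rw [Fintype.card_fin, Fintype.card_fin] at hccπ₁
  have hccπ₂ := CCAux.cc_extendDomain f₂E (α₂ * finRotate (2*(n-k)+2))
  rw [Fintype.card_fin, Fintype.card_fin] at hccπ₂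
  have hccsw := CCAux.cc_insert ((α₂ * finRotate (2*(n-k)+2)).extendDomain f₂E) hswne hπ₂b
  have hccdis := CCAux.cc_disjoint hdisj
  rw [← hdecomp, Fintype.card_fin] at hccdis
  push_cast at hgeq
  refine ⟨g₁, g₂, ⟨α₁, α₁ * finRotate (2*k+2), hpu1⟩,
    ⟨α₂, α₂ * finRotate (2*(n-k)+2), hpu2⟩, ?_, ?_, ?_⟩
  · omega
  · intro i x y hxv hyv
    apply Fin.ext
    rw [← hAdef x, hxv, hyv]
    exact (hα₁ i).symm
  · intro i x y hxv hyv
    apply Fin.ext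
    rw [← hAdef x, hxv, hyv]
    exact (hα₂ i).symm
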